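/- Let R be an associative ring and κ a regular cardinal. The class of κ-flat left R-modules (modules all of whose maps from κ-presentable modules factor through projectives) is closed under extensions, kernels of surjective morphisms, and κ-filtered colimits. -/

import Mathlib

open CategoryTheory CategoryTheory.Limits

universe u

/-- A category `J` is `κ`-filtered if every subdiagram of size `< κ` admits a cocone. -/
def IsCardFiltered (J : Type u) [Category.{u} J] (κ : Cardinal.{u}) : Prop :=
  ∀ (K : Type u) (_ : SmallCategory K), Cardinal.mk K < κ →
    Cardinal.mk (Σ (a : K) (b : K), a ⟶ b) < κ →
    ∀ F : K ⥤ J, Nonempty (Cocone F)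

variable {R : Type u} [Ring R]

/-- A left `R`-module is `κ`-presentable if it is the cokernel of a morphism of free
modules each with fewer than `κ` generators. -/
def IsKappaPresentable (κ : Cardinal.{u}) (E : ModuleCat.{u} R) : Prop :=
  ∃ (X Y : Type u) (_ : Cardinal.mk X < κ) (_ : Cardinal.mk Y < κ)
    (g : (X →₀ R) →ₗ[R] (Y →₀ R)),
    Nonempty ((((Y →₀ R)) ⧸ (LinearMap.range g)) ≃ₗ[R] E)

/-- A left `R`-module `F` is `κ`-flat if every morphism from a `κ`-presentable module
into `F` factors through a projective module. -/
def IsKappaFlat (κ : Cardinal.{u}) (F : ModuleCat.{u} R) : Prop :=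
  ∀ (E : ModuleCat.{u} R), IsKappaPresentable κ E → ∀ φ : E ⟶ F,
    ∃ (P : ModuleCat.{u} R) (_ : Projective P) (α : E ⟶ P) (β : P ⟶ F), α ≫ β = φ

lemma lift_through_f {S : ShortComplex (ModuleCat.{u} R)} (hS : S.ShortExact)
    {W : ModuleCat.{u} R} (ψ : W ⟶ S.X₂) (hψ : ψ ≫ S.g = 0) :
    ∃ μ : W ⟶ S.X₁, μ ≫ S.f = ψ := by
  have hinj : Function.Injective S.f := hS.moduleCat_injective_f
  have hex := (ShortComplex.moduleCat_exact_iff S).mp hS.exact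
  have hmem : ∀ w : W, ψ w ∈ LinearMap.range S.f.hom := by
    intro w
    obtain ⟨y, hy⟩ := hex (ψ w) (LinearMap.congr_fun (congrArg ModuleCat.Hom.hom hψ) w)
    exact ⟨y, hy⟩
  refine ⟨ModuleCat.ofHom ((LinearEquiv.ofInjective S.f.hom hinj).symm.toLinearMap ∘ₗ
    LinearMap.codRestrict (LinearMap.range S.f.hom) ψ.hom hmem), ?_⟩
  apply ModuleCat.hom_ext
  apply LinearMap.ext
  intro w
  show S.f ((LinearEquiv.ofInjective S.f.hom hinj).symm ⟨ψ w, hmem w⟩) = ψ w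
  have := (LinearEquiv.ofInjective S.f.hom hinj).apply_symm_apply ⟨ψ w, hmem w⟩
  calc S.f ((LinearEquiv.ofInjective S.f.hom hinj).symm ⟨ψ w, hmem w⟩)
      = ((LinearEquiv.ofInjective S.f.hom hinj)
          ((LinearEquiv.ofInjective S.f.hom hinj).symm ⟨ψ w, hmem w⟩) :
            LinearMap.range S.f.hom) := rfl
    _ = ψ w := by rw [this]

lemma card_sigma_hom_le {K : Type u} [SmallCategory K] [Quiver.IsThin K] :
    Cardinal.mk (Σ (a : K) (b : K), a ⟶ b) ≤ Cardinal.mk K * Cardinal.mk K := by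
  have h : Cardinal.mk (Σ (a : K) (b : K), a ⟶ b) ≤ Cardinal.mk (K × K) := by
    apply Cardinal.mk_le_of_injective (f := fun p => (p.1, p.2.1))
    rintro ⟨a, b, f⟩ ⟨a', b', f'⟩ hp
    simp only [Prod.mk.injEq] at hp
    obtain ⟨rfl, rfl⟩ := hp
    rw [Subsingleton.elim f f']
  rwa [Cardinal.mk_prod, Cardinal.lift_id] at h

lemma isFiltered_of_isCardFiltered {κ : Cardinal.{u}} (hκ : κ.IsRegular) {J : Type u}
    [SmallCategory J]
    (hJ : IsCardFiltered J κ) : IsFiltered J := by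
  apply IsFiltered.of_cocone_nonempty.{u}
  intro K _ _ F
  have h1 : Cardinal.mk K < κ :=
    (Cardinal.mk_lt_aleph0_iff.mpr inferInstance).trans_le hκ.aleph0_le
  have h2 : Cardinal.mk (Σ (a : K) (b : K), a ⟶ b) < κ :=
    (Cardinal.mk_lt_aleph0_iff.mpr inferInstance).trans_le hκ.aleph0_le
  exact hJ K _ h1 h2 F

lemma exists_upper {κ : Cardinal.{u}} (hκ : κ.IsRegular) {J : Type u} [SmallCategory J]
    (hJ : IsCardFiltered J κ)
    {I : Type u} (hI : Cardinal.mk I < κ) (o : I → J) :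
    ∃ (j : J) (_ : ∀ i, o i ⟶ j), True := by
  have e : Cardinal.mk (Discrete I) = Cardinal.mk I :=
    Cardinal.mk_congr ⟨Discrete.as, Discrete.mk, fun ⟨a⟩ => rfl, fun a => rfl⟩
  haveI : Quiver.IsThin (Discrete I) := fun a b => inferInstance
  obtain ⟨co⟩ := hJ (Discrete I) _ (e ▸ hI)
    (card_sigma_hom_le.trans_lt (by rw [e]; exact Cardinal.mul_lt_of_lt hκ.aleph0_le hI hI))
    (Discrete.functor o)
  exact ⟨co.pt, fun i => co.ι.app ⟨i⟩, trivial⟩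

lemma exists_fan {κ : Cardinal.{u}} (hκ : κ.IsRegular) {J : Type u} [SmallCategory J]
    (hJ : IsCardFiltered J κ)
    {I : Type u} (hI : Cardinal.mk I < κ) (j : J) (k : I → J) (f : ∀ i, j ⟶ k i) :
    ∃ (l : J) (h : j ⟶ l) (t : ∀ i, k i ⟶ l), ∀ i, f i ≫ t i = h := by
  have e : Cardinal.mk (WidePushoutShape I) = Cardinal.mk I + 1 := by
    rw [show (WidePushoutShape I) = Option I from rfl, Cardinal.mk_option]
  have h1 : Cardinal.mk (WidePushoutShape I) < κ := by
    rw [e]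
    exact Cardinal.add_lt_of_lt hκ.aleph0_le hI (Cardinal.one_lt_aleph0.trans_le hκ.aleph0_le)
  obtain ⟨co⟩ := hJ (WidePushoutShape I) _ h1
    (card_sigma_hom_le.trans_lt (Cardinal.mul_lt_of_lt hκ.aleph0_le h1 h1))
    (WidePushoutShape.wideSpan j k f)
  exact ⟨co.pt, co.ι.app none, fun i => co.ι.app (some i),
    fun i => co.w (WidePushoutShape.Hom.init i)⟩

lemma quot_isKappaPresentable {κ : Cardinal.{u}} {Z Y : Type u} (hY : Cardinal.mk Y < κ)
    (hZ : Cardinal.mk Z < κ) (h : (Y →₀ R) →ₗ[R] (Z →₀ R)) :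
    IsKappaPresentable (R := R) κ (ModuleCat.of R ((Z →₀ R) ⧸ LinearMap.range h)) :=
  ⟨Y, Z, hY, hZ, h, ⟨LinearEquiv.refl R _⟩⟩

lemma factor_small {κ : Cardinal.{u}} (hκ : κ.IsRegular) {F : ModuleCat.{u} R}
    (hF : IsKappaFlat κ F) {E : ModuleCat.{u} R} (hE : IsKappaPresentable κ E) (φ : E ⟶ F) :
    ∃ (Z : Type u) (_ : Cardinal.mk Z < κ) (α : E →ₗ[R] (Z →₀ R))
      (β : (Z →₀ R) →ₗ[R] F), β ∘ₗ α = φ.hom := by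
  obtain ⟨P, hP, α, β, hβα⟩ := hF E hE φ
  -- P is a projective module
  haveI : Projective (ModuleCat.of R P) := Projective.of_iso (Iso.refl _) hP
  have hPmod : Module.Projective R P := (IsProjective.iff_projective P).mpr this
  obtain ⟨s, hs⟩ := Module.projective_def.mp hPmod
  -- generators of E
  obtain ⟨X, Y, hX, hY, g, ⟨e⟩⟩ := hE
  set π : (Y →₀ R) →ₗ[R] E := e.toLinearMap ∘ₗ (LinearMap.range g).mkQ with hπdef
  have hπ : Function.Surjective π := e.surjective.comp (Submodule.mkQ_surjective _)
  set v : (Y →₀ R) →ₗ[R] (P →₀ R) := s ∘ₗ α.hom ∘ₗ π with hvdef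
  set Z₀ : Set P := ⋃ y : Y, ((v (Finsupp.single y 1)).support : Set P) with hZ₀def
  have hZ₀ : Cardinal.mk Z₀ < κ := by
    refine lt_of_le_of_lt Cardinal.mk_iUnion_le_sum_mk ?_
    exact Cardinal.sum_lt_of_isRegular hκ hY
      (fun y => ((v (Finsupp.single y 1)).support.finite_toSet.lt_aleph0).trans_le hκ.aleph0_le)
  -- every image of s∘α is supported in Z₀
  have hmem : ∀ m : E, s (α m) ∈ Finsupp.supported R R Z₀ := by
    have hle : LinearMap.range v ≤ Finsupp.supported R R Z₀ := by
      rw [LinearMap.range_eq_map, ← Finsupp.basisSingleOne.span_eq, Submodule.map_span,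
        Submodule.span_le]
      rintro _ ⟨_, ⟨y, rfl⟩, rfl⟩
      simp only [Finsupp.coe_basisSingleOne]
      exact (Finsupp.mem_supported R _).mpr
        (Set.subset_iUnion (fun y : Y => ((v (Finsupp.single y 1)).support : Set P)) y)
    intro m
    obtain ⟨w, rfl⟩ := hπ m
    exact hle ⟨w, rfl⟩
  refine ⟨Z₀, hZ₀, (Finsupp.supportedEquivFinsupp Z₀).toLinearMap ∘ₗ
    LinearMap.codRestrict (Finsupp.supported R R Z₀) (s ∘ₗ α.hom) hmem,
    β.hom ∘ₗ (Finsupp.linearCombination R id) ∘ₗ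
      (Finsupp.supported R R Z₀).subtype ∘ₗ (Finsupp.supportedEquivFinsupp Z₀).symm.toLinearMap,
    ?_⟩
  ext m
  simp only [LinearMap.comp_apply, LinearEquiv.coe_coe]
  rw [LinearEquiv.symm_apply_apply]
  have : (Finsupp.linearCombination R (id : P → P)) (s (α m)) = α m := hs (α m)
  rw [show ((Finsupp.supported R R Z₀).subtype)
      (LinearMap.codRestrict (Finsupp.supported R R Z₀) (s ∘ₗ α.hom) hmem m)
      = s (α m) from rfl, this]
  exact LinearMap.congr_fun (congrArg ModuleCat.Hom.hom hβα) m

lemma ext_closed {κ : Cardinal.{u}} (S : ShortComplex (ModuleCat.{u} R)) (hS : S.ShortExact)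
    (h1 : IsKappaFlat κ S.X₁) (h3 : IsKappaFlat κ S.X₃) : IsKappaFlat κ S.X₂ := by
  intro E hE φ
  obtain ⟨P, hP, α, β, hβα⟩ := h3 E hE (φ ≫ S.g)
  haveI := hS.epi_g
  haveI := hP
  set βt : P ⟶ S.X₂ := Projective.factorThru β S.g with hβt
  have hβtg : βt ≫ S.g = β := Projective.factorThru_comp β S.g
  set ψ : E ⟶ S.X₂ := φ - α ≫ βt with hψ
  have hψg : ψ ≫ S.g = 0 := by
    rw [hψ, Preadditive.sub_comp, Category.assoc, hβtg, hβα, sub_self]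
  obtain ⟨μ, hμ⟩ := lift_through_f hS ψ hψg
  obtain ⟨Q, hQ, α', β', hβ'⟩ := h1 E hE μ
  haveI := hQ
  refine ⟨P ⊞ Q, inferInstance, biprod.lift α α', biprod.desc βt (β' ≫ S.f), ?_⟩
  rw [biprod.lift_desc, ← Category.assoc, hβ', hμ, hψ]
  abel

lemma ker_closed {κ : Cardinal.{u}} (hκ : κ.IsRegular) (S : ShortComplex (ModuleCat.{u} R))
    (hS : S.ShortExact) (h2 : IsKappaFlat κ S.X₂) (h3 : IsKappaFlat κ S.X₃) :
    IsKappaFlat κ S.X₁ := by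
  intro E hE φ
  have hinj : Function.Injective S.f := hS.moduleCat_injective_f
  obtain ⟨Z, hZ, α, β, hβα⟩ := factor_small hκ h2 hE (φ ≫ S.f)
  obtain ⟨X, Y, hX, hY, g, ⟨e⟩⟩ := hE
  set π : (Y →₀ R) →ₗ[R] E := e.toLinearMap ∘ₗ (LinearMap.range g).mkQ with hπdef
  have hπ : Function.Surjective π := e.surjective.comp (Submodule.mkQ_surjective _)
  set h : (Y →₀ R) →ₗ[R] (Z →₀ R) := α ∘ₗ π with hhdef
  set N := LinearMap.range h with hNdef
  have hzero : ∀ m : E, S.g (S.f (φ m)) = 0 := by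
    intro m
    exact LinearMap.congr_fun (congrArg ModuleCat.Hom.hom S.zero) (φ m)
  have hβα' : ∀ m : E, β (α m) = S.f (φ m) := fun m => congrFun (congrArg DFunLike.coe hβα) m
  have hgle : N ≤ LinearMap.ker (S.g.hom ∘ₗ β) := by
    rintro _ ⟨w, rfl⟩
    show S.g (β (α (π w))) = 0
    rw [hβα' (π w)]
    exact hzero (π w)
  set βbar : ((Z →₀ R) ⧸ N) →ₗ[R] S.X₃ := Submodule.liftQ N (S.g.hom ∘ₗ β) hgle
    with hβbar
  obtain ⟨Q, hQ, γ', δ, hδγ⟩ := h3 (ModuleCat.of R ((Z →₀ R) ⧸ N))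
    (quot_isKappaPresentable hY hZ h) (ModuleCat.ofHom βbar)
  set γ : (Z →₀ R) →ₗ[R] Q := γ'.hom ∘ₗ N.mkQ with hγdef
  have hγα : ∀ m : E, γ (α m) = 0 := by
    intro m
    obtain ⟨w, rfl⟩ := hπ m
    show γ' (N.mkQ (h w)) = 0
    rw [show N.mkQ (h w) = 0 from (Submodule.Quotient.mk_eq_zero N).mpr ⟨w, rfl⟩]
    exact map_zero _
  haveI := hS.epi_g
  haveI := hQ
  set δt : Q ⟶ S.X₂ := Projective.factorThru δ S.g with hδtdef
  have hδt : δt ≫ S.g = δ := Projective.factorThru_comp δ S.g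
  have hδt' : ∀ q : Q, S.g (δt q) = δ q := fun q => LinearMap.congr_fun (congrArg ModuleCat.Hom.hom hδt) q
  set θ0 : (Z →₀ R) →ₗ[R] S.X₂ := β - δt.hom ∘ₗ γ with hθ0def
  set θ0' : ModuleCat.of R (Z →₀ R) ⟶ S.X₂ := ModuleCat.ofHom θ0 with hθ0'def
  have hθ0' : ∀ x, θ0' x = θ0 x := fun _ => rfl
  have hθ0g : θ0' ≫ S.g = 0 := by
    apply ModuleCat.hom_ext
    apply LinearMap.ext
    intro x
    show S.g (β x - δt (γ x)) = 0
    rw [map_sub, hδt' (γ x)]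
    have : δ (γ x) = S.g (β x) := by
      show (γ' ≫ δ) (N.mkQ x) = S.g (β x)
      rw [hδγ]
      exact Submodule.liftQ_apply N _ x
    rw [this, sub_self]
  obtain ⟨θ, hθ⟩ := lift_through_f hS θ0' hθ0g
  have hθ' : ∀ x, S.f (θ x) = θ0 x := fun x => LinearMap.congr_fun (congrArg ModuleCat.Hom.hom hθ) x
  refine ⟨ModuleCat.of R (Z →₀ R),
    ModuleCat.projective_of_free (ι := Z) Finsupp.basisSingleOne,
    ModuleCat.ofHom α, θ, ?_⟩
  apply ModuleCat.hom_ext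
  apply LinearMap.ext
  intro m
  apply hinj
  show S.f (θ (α m)) = S.f (φ m)
  rw [hθ' (α m)]
  show β (α m) - δt (γ (α m)) = S.f (φ m)
  rw [hγα m, map_zero, sub_zero, hβα' m]

lemma colim_closed {κ : Cardinal.{u}} (hκ : κ.IsRegular) {J : Type u} [SmallCategory J]
    (hJ : IsCardFiltered J κ) (D : J ⥤ ModuleCat.{u} R) (hD : ∀ j, IsKappaFlat κ (D.obj j))
    (c : Cocone D) (hc : IsColimit c) : IsKappaFlat κ c.pt := by
  haveI : IsFiltered J := isFiltered_of_isCardFiltered hκ hJ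
  intro E hE φ
  obtain ⟨X, Y, hX, hY, g, ⟨e⟩⟩ := hE
  set π : (Y →₀ R) →ₗ[R] E := e.toLinearMap ∘ₗ (LinearMap.range g).mkQ with hπdef
  have hπ : Function.Surjective π := e.surjective.comp (Submodule.mkQ_surjective _)
  set ψ : (Y →₀ R) →ₗ[R] c.pt := φ.hom ∘ₗ π with hψdef
  have hrep : ∀ y : Y, ∃ (j : J) (a : D.obj j), c.ι.app j a = ψ (Finsupp.single y 1) :=
    fun y => Concrete.isColimit_exists_rep D hc _
  choose jy ay hay using hrep
  obtain ⟨j, t, -⟩ := exists_upper hκ hJ hY jy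
  set fn : Y → D.obj j := fun y => D.map (t y) (ay y) with hfn
  set ψ' : (Y →₀ R) →ₗ[R] D.obj j := Finsupp.lift (D.obj j) R Y fn with hψ'def
  have hψ'single : ∀ y r, ψ' (Finsupp.single y r) = r • fn y := by
    intro y r
    rw [hψ'def]
    simp [Finsupp.lift_apply, Finsupp.sum_single_index]
  have hι : ∀ (u : Y →₀ R), c.ι.app j (ψ' u) = ψ u := by
    have : (c.ι.app j).hom ∘ₗ ψ' = ψ := by
      apply Finsupp.lhom_ext
      intro y r
      show c.ι.app j (ψ' (Finsupp.single y r)) = ψ (Finsupp.single y r)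
      rw [hψ'single, map_smul]
      have hnat : c.ι.app j (fn y) = ψ (Finsupp.single y 1) := by
        rw [hfn]
        have := LinearMap.congr_fun (congrArg ModuleCat.Hom.hom (c.w (t y))) (ay y)
        exact this.trans (hay y)
      rw [hnat]
      exact (map_smul ψ r _).symm.trans (congrArg ψ (Finsupp.smul_single_one y r))
    exact fun u => congrFun (congrArg DFunLike.coe this) u
  have hπg0 : ∀ u : (X →₀ R), ψ (g u) = 0 := by
    intro u
    rw [hψdef]
    show φ (e ((LinearMap.range g).mkQ (g u))) = 0
    rw [show (LinearMap.range g).mkQ (g u) = 0 from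
      (Submodule.Quotient.mk_eq_zero _).mpr ⟨u, rfl⟩]
    rw [map_zero, map_zero]
  have hkill : ∀ x : X, ∃ (k : J) (f1 : j ⟶ k),
      D.map f1 (ψ' (g (Finsupp.single x 1))) = 0 := by
    intro x
    have h0 : c.ι.app j (ψ' (g (Finsupp.single x 1))) = c.ι.app j (0 : D.obj j) := by
      rw [hι, hπg0, map_zero]
    obtain ⟨k, f1, f2, hk⟩ := Concrete.isColimit_exists_of_rep_eq D hc _ _ h0
    exact ⟨k, f1, hk.trans (map_zero (D.map f2).hom)⟩
  choose kx f1 hf1 using hkill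
  obtain ⟨l, hmap, t', hcomm⟩ := exists_fan hκ hJ hX j kx f1
  set χ : (Y →₀ R) →ₗ[R] D.obj l := (D.map hmap).hom ∘ₗ ψ' with hχdef
  have hχg : χ ∘ₗ g = 0 := by
    apply Finsupp.lhom_ext
    intro x r
    show χ (g (Finsupp.single x r)) = 0
    rw [← Finsupp.smul_single_one, map_smul, map_smul]
    have : χ (g (Finsupp.single x 1)) = 0 := by
      show D.map hmap (ψ' (g (Finsupp.single x 1))) = 0
      have hcmp : D.map hmap (ψ' (g (Finsupp.single x 1)))
          = D.map (t' x) (D.map (f1 x) (ψ' (g (Finsupp.single x 1)))) := by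
        rw [← hcomm x]
        exact LinearMap.congr_fun (congrArg ModuleCat.Hom.hom (D.map_comp (f1 x) (t' x)))
          (ψ' (g (Finsupp.single x 1)))
      rw [hcmp, hf1 x, map_zero]
    rw [this, smul_zero]
  have hle : LinearMap.range g ≤ LinearMap.ker χ := LinearMap.range_le_ker_iff.mpr hχg
  set χbar : ((Y →₀ R) ⧸ LinearMap.range g) →ₗ[R] D.obj l :=
    Submodule.liftQ _ χ hle with hχbar
  set μ' : E ⟶ D.obj l := ModuleCat.ofHom (χbar ∘ₗ e.symm.toLinearMap : E →ₗ[R] D.obj l) with hμ'def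
  obtain ⟨P, hP, α, β, hβα⟩ := hD l E ⟨X, Y, hX, hY, g, ⟨e⟩⟩ μ'
  refine ⟨P, hP, α, β ≫ c.ι.app l, ?_⟩
  rw [← Category.assoc, hβα]
  apply ModuleCat.hom_ext
  apply LinearMap.ext
  intro m
  obtain ⟨w, rfl⟩ := hπ m
  have h1 : μ' (π w) = χ w := by
    show χbar (e.symm (e ((LinearMap.range g).mkQ w))) = χ w
    rw [e.symm_apply_apply]
    exact Submodule.liftQ_apply _ χ w
  show c.ι.app l (μ' (π w)) = φ (π w)
  rw [h1]
  have h2 : c.ι.app l (D.map hmap (ψ' w)) = c.ι.app j (ψ' w) :=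
    LinearMap.congr_fun (congrArg ModuleCat.Hom.hom (c.w hmap)) (ψ' w)
  show c.ι.app l (D.map hmap (ψ' w)) = φ (π w)
  rw [h2, hι w]
  rfl

/-- The class of `κ`-flat left `R`-modules is closed under extensions, kernels of
surjective morphisms, and `κ`-filtered colimits. -/
theorem isKappaFlat_closure (κ : Cardinal.{u}) (hκ : κ.IsRegular) :
    -- closed under extensions
    (∀ S : ShortComplex (ModuleCat.{u} R), S.ShortExact →
      IsKappaFlat κ S.X₁ → IsKappaFlat κ S.X₃ → IsKappaFlat κ S.X₂) ∧
    -- closed under kernels of surjective morphisms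
    (∀ S : ShortComplex (ModuleCat.{u} R), S.ShortExact →
      IsKappaFlat κ S.X₂ → IsKappaFlat κ S.X₃ → IsKappaFlat κ S.X₁) ∧
    -- closed under κ-filtered colimits
    (∀ (J : Type u) (_ : SmallCategory J), IsCardFiltered J κ →
      ∀ (D : J ⥤ ModuleCat.{u} R), (∀ j, IsKappaFlat κ (D.obj j)) →
      ∀ (c : Cocone D), IsColimit c → IsKappaFlat κ c.pt) :=
  ⟨fun S hS h1 h3 => ext_closed S hS h1 h3,
   fun S hS h2 h3 => ker_closed hκ S hS h2 h3,
   fun J _ hJ D hD c hc => colim_closed hκ hJ D hD c hc⟩
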